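/- Let δ > 0, γ₀ > 0 with γ₀ ≠ δ - √(δ² - λ) and γ₀ ≠ δ + √(δ² - λ) when λ < δ², and γ₀ ≠ δ when λ ≥ δ². Let g : [0,∞) → ℝ be continuous with |g(t)| ≤ K e^{-γ₀ t} for all t ≥ 0 and some K ≥ 0. If λ > δ², set φ = √(λ - δ²) and define for γ₀ < δ: w(t) = (1/φ)∫₀ᵗ e^{-δ(t-s)} sin(φ(t-s)) g(s) ds, and for γ₀ > δ: w(t) = -(1/φ)∫ₜ^∞ e^{-δ(t-s)} sin(φ(t-s)) g(s) ds. Then in either case w is a solution of w'' + 2δw' + λw = g on [0,∞), and there exists a constant Γ depending only on γ₀, δ, λ such that |w(t)| + |w'(t)| ≤ Γ K e^{-γ₀ t} for all t ≥ 0. -/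

import Mathlib

open Real Filter MeasureTheory intervalIntegral

open Set Topology

lemma expInt (c : ℝ) (hc : c ≠ 0) (a b : ℝ) :
    ∫ s in a..b, Real.exp (c*s) = (Real.exp (c*b) - Real.exp (c*a))/c := by
  have h : ∀ x ∈ Set.uIcc a b, HasDerivAt (fun x => Real.exp (c*x)/c) (Real.exp (c*x)) x := by
    intro x _
    have := (((hasDerivAt_id x).const_mul c).exp).div_const c
    simpa [mul_comm, mul_div_assoc, mul_div_cancel_left₀ _ hc] using this
  rw [intervalIntegral.integral_eq_sub_of_hasDerivAt h
    ((Real.continuous_exp.comp (continuous_const.mul continuous_id)).intervalIntegrable a b)]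
  ring

lemma expIoi (c a : ℝ) (hc : 0 < c) :
    ∫ s in Set.Ioi a, Real.exp (-c*s) = Real.exp (-c*a)/c := by
  have h : ∀ x ∈ Set.Ici a, HasDerivAt (fun x => -(Real.exp (-c*x)/c)) (Real.exp (-c*x)) x := by
    intro x _
    have := ((((hasDerivAt_id x).const_mul (-c)).exp).div_const c).neg
    simp only [id_eq, mul_one] at this
    refine this.congr_deriv ?_; symm
    rw [mul_neg, neg_div, neg_neg, mul_comm, mul_div_assoc, div_self hc.ne', mul_one]
  have htend : Tendsto (fun x => -(Real.exp (-c*x)/c)) atTop (𝓝 0) := by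
    have : Tendsto (fun x : ℝ => Real.exp (-c*x)) atTop (𝓝 0) :=
      Real.tendsto_exp_atBot.comp (tendsto_id.const_mul_atTop_of_neg (by linarith))
    simpa [neg_div] using (this.neg).div_const c
  have := MeasureTheory.integral_Ioi_of_hasDerivAt_of_tendsto' h
    (exp_neg_integrableOn_Ioi a hc) htend
  rw [this]; ring

/-- Special solution of the scalar non-homogeneous equation w'' + 2δw' + λw = g
(λ > δ²) inheriting the exponential decay rate of the forcing term. -/
theorem stmt14 (δ lam γ₀ K : ℝ) (hδ : 0 < δ) (hlam : δ^2 < lam)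
    (hγ₀ : 0 < γ₀) (hne : γ₀ ≠ δ) (hK : 0 ≤ K)
    (g : ℝ → ℝ) (hg : Continuous g)
    (hgb : ∀ t ≥ (0:ℝ), |g t| ≤ K * Real.exp (-γ₀ * t)) :
    ∃ Γ : ℝ, ∀ w : ℝ → ℝ,
      ((γ₀ < δ ∧ w = fun t => (1/Real.sqrt (lam - δ^2)) *
          ∫ s in (0:ℝ)..t, Real.exp (-δ*(t-s)) * Real.sin (Real.sqrt (lam - δ^2)*(t-s)) * g s) ∨
       (δ < γ₀ ∧ w = fun t => -(1/Real.sqrt (lam - δ^2)) *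
          ∫ s in Set.Ioi t, Real.exp (-δ*(t-s)) * Real.sin (Real.sqrt (lam - δ^2)*(t-s)) * g s)) →
      (∀ t ≥ (0:ℝ), deriv (deriv w) t + 2*δ*(deriv w t) + lam * w t = g t) ∧
      (∀ t ≥ (0:ℝ), |w t| + |deriv w t| ≤ Γ * K * Real.exp (-γ₀ * t)) := by
  set φ := Real.sqrt (lam - δ^2) with hφdef
  have hφpos : 0 < φ := Real.sqrt_pos.2 (by linarith)
  have hφsq : φ^2 = lam - δ^2 := Real.sq_sqrt (by linarith)
  -- integrand building blocks
  set f1 : ℝ → ℝ := fun s => Real.exp (δ*s) * Real.cos (φ*s) * g s with hf1def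
  set f2 : ℝ → ℝ := fun s => Real.exp (δ*s) * Real.sin (φ*s) * g s with hf2def
  have hf1c : Continuous f1 := by
    exact ((Real.continuous_exp.comp (continuous_const.mul continuous_id)).mul
      (Real.continuous_cos.comp (continuous_const.mul continuous_id))).mul hg
  have hf2c : Continuous f2 := by
    exact ((Real.continuous_exp.comp (continuous_const.mul continuous_id)).mul
      (Real.continuous_sin.comp (continuous_const.mul continuous_id))).mul hg
  -- homogeneous solutions
  set u : ℝ → ℝ := fun t => Real.exp (-δ*t) * Real.sin (φ*t) with hudef
  set v : ℝ → ℝ := fun t => Real.exp (-δ*t) * Real.cos (φ*t) with hvdef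
  set u1 : ℝ → ℝ := fun t => Real.exp (-δ*t) * (φ*Real.cos (φ*t) - δ*Real.sin (φ*t)) with hu1def
  set v1 : ℝ → ℝ := fun t => Real.exp (-δ*t) * (-(φ*Real.sin (φ*t)) - δ*Real.cos (φ*t)) with hv1def
  have hE : ∀ t : ℝ, HasDerivAt (fun t => Real.exp (-δ*t)) (-δ * Real.exp (-δ*t)) t := by
    intro t
    simpa [mul_comm] using ((hasDerivAt_id t).const_mul (-δ)).exp
  have hS : ∀ t : ℝ, HasDerivAt (fun t => Real.sin (φ*t)) (φ * Real.cos (φ*t)) t := by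
    intro t
    have h0 : HasDerivAt (fun x:ℝ => φ*x) φ t := by simpa using (hasDerivAt_id t).const_mul φ
    simpa [mul_comm] using h0.sin
  have hC : ∀ t : ℝ, HasDerivAt (fun t => Real.cos (φ*t)) (-(φ * Real.sin (φ*t))) t := by
    intro t
    have h0 : HasDerivAt (fun x:ℝ => φ*x) φ t := by simpa using (hasDerivAt_id t).const_mul φ
    simpa [mul_comm] using h0.cos
  have hu' : ∀ t, HasDerivAt u (u1 t) t := by
    intro t
    have := (hE t).mul (hS t)
    rw [hudef, hu1def]
    refine this.congr_deriv ?_; symm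
    ring
  have hv' : ∀ t, HasDerivAt v (v1 t) t := by
    intro t
    have := (hE t).mul (hC t)
    rw [hvdef, hv1def]
    refine this.congr_deriv ?_; symm
    ring
  have hu1' : ∀ t, HasDerivAt u1 (-2*δ*u1 t - lam*u t) t := by
    intro t
    have := (hE t).mul (((hC t).const_mul φ).sub ((hS t).const_mul δ))
    rw [hu1def]
    refine this.congr_deriv ?_; symm
    simp only [hudef, hu1def, Pi.sub_apply]
    linear_combination (Real.exp (-δ*t) * Real.sin (φ*t)) * hφsq
  have hv1' : ∀ t, HasDerivAt v1 (-2*δ*v1 t - lam*v t) t := by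
    intro t
    have := (hE t).mul ((((hS t).const_mul φ).neg).sub ((hC t).const_mul δ))
    rw [hv1def]
    refine this.congr_deriv ?_; symm
    simp only [hvdef, hv1def, Pi.sub_apply, Pi.neg_apply]
    linear_combination (Real.exp (-δ*t) * Real.cos (φ*t)) * hφsq
  -- the key cross-term identities
  have hee : ∀ t : ℝ, Real.exp (-δ*t) * Real.exp (δ*t) = 1 := by
    intro t; rw [← Real.exp_add]; simp
  have hcross0 : ∀ t, u t * f1 t - v t * f2 t = 0 := by
    intro t; simp only [hudef, hvdef, hf1def, hf2def]; ring
  have hcross1 : ∀ t, (1/φ) * (u1 t * f1 t - v1 t * f2 t) = g t := by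
    intro t
    simp only [hu1def, hv1def, hf1def, hf2def]
    have h2 := Real.sin_sq_add_cos_sq (φ*t)
    have hee' : Real.exp (-(δ*t)) * Real.exp (δ*t) = 1 := by rw [← Real.exp_add]; simp
    field_simp
    linear_combination (Real.exp (-(δ*t)) * Real.exp (δ*t) * g t * φ) * h2 +
      (g t * φ) * hee'
  -- pointwise bounds
  have hub : ∀ t, |u t| ≤ Real.exp (-δ*t) := by
    intro t
    rw [hudef, abs_mul, Real.abs_exp]
    nlinarith [Real.abs_sin_le_one (φ*t), Real.exp_pos (-δ*t), abs_nonneg (Real.sin (φ*t))]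
  have hvb : ∀ t, |v t| ≤ Real.exp (-δ*t) := by
    intro t
    rw [hvdef, abs_mul, Real.abs_exp]
    nlinarith [Real.abs_cos_le_one (φ*t), Real.exp_pos (-δ*t), abs_nonneg (Real.cos (φ*t))]
  have hu1b : ∀ t, |u1 t| ≤ (φ+δ) * Real.exp (-δ*t) := by
    intro t
    rw [hu1def, abs_mul, Real.abs_exp, mul_comm (φ+δ) (Real.exp (-δ*t))]
    have : |φ*Real.cos (φ*t) - δ*Real.sin (φ*t)| ≤ φ + δ := by
      refine (abs_sub _ _).trans ?_
      rw [abs_mul, abs_mul, abs_of_pos hφpos, abs_of_pos hδ]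
      nlinarith [Real.abs_sin_le_one (φ*t), Real.abs_cos_le_one (φ*t)]
    exact mul_le_mul_of_nonneg_left this (Real.exp_pos _).le
  have hv1b : ∀ t, |v1 t| ≤ (φ+δ) * Real.exp (-δ*t) := by
    intro t
    rw [hv1def, abs_mul, Real.abs_exp, mul_comm (φ+δ) (Real.exp (-δ*t))]
    have : |-(φ*Real.sin (φ*t)) - δ*Real.cos (φ*t)| ≤ φ + δ := by
      refine (abs_sub _ _).trans ?_
      rw [abs_neg, abs_mul, abs_mul, abs_of_pos hφpos, abs_of_pos hδ]
      nlinarith [Real.abs_sin_le_one (φ*t), Real.abs_cos_le_one (φ*t)]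
    exact mul_le_mul_of_nonneg_left this (Real.exp_pos _).le
  have hf1b : ∀ t ≥ (0:ℝ), |f1 t| ≤ K * Real.exp (-(γ₀-δ)*t) := by
    intro t ht
    rw [hf1def, abs_mul, abs_mul, Real.abs_exp]
    calc Real.exp (δ*t) * |Real.cos (φ*t)| * |g t| ≤ Real.exp (δ*t) * 1 * (K * Real.exp (-γ₀*t)) := by
          apply mul_le_mul
          · exact mul_le_mul_of_nonneg_left (Real.abs_cos_le_one _) (Real.exp_pos _).le
          · exact hgb t ht
          · exact abs_nonneg _
          · positivity
      _ = K * Real.exp (-(γ₀-δ)*t) := by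
          rw [mul_one, show Real.exp (δ*t) * (K * Real.exp (-γ₀*t)) = K * (Real.exp (δ*t) * Real.exp (-γ₀*t)) by ring, ← Real.exp_add]
          ring_nf
  have hf2b : ∀ t ≥ (0:ℝ), |f2 t| ≤ K * Real.exp (-(γ₀-δ)*t) := by
    intro t ht
    rw [hf2def, abs_mul, abs_mul, Real.abs_exp]
    calc Real.exp (δ*t) * |Real.sin (φ*t)| * |g t| ≤ Real.exp (δ*t) * 1 * (K * Real.exp (-γ₀*t)) := by
          apply mul_le_mul
          · exact mul_le_mul_of_nonneg_left (Real.abs_sin_le_one _) (Real.exp_pos _).le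
          · exact hgb t ht
          · exact abs_nonneg _
          · positivity
      _ = K * Real.exp (-(γ₀-δ)*t) := by
          rw [mul_one, show Real.exp (δ*t) * (K * Real.exp (-γ₀*t)) = K * (Real.exp (δ*t) * Real.exp (-γ₀*t)) by ring, ← Real.exp_add]
          ring_nf
  rcases lt_or_gt_of_ne hne with hlt | hgt
  · -- case γ₀ < δ
    set c := δ - γ₀ with hcdef
    have hc : 0 < c := by rw [hcdef]; linarith
    refine ⟨(2 + 2*(φ+δ))/(φ*c), ?_⟩
    intro w hw
    rcases hw with ⟨-, hw⟩ | ⟨h2, -⟩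
    swap
    · exact absurd h2 (by linarith)
    set A : ℝ → ℝ := fun t => ∫ s in (0:ℝ)..t, f1 s with hAdef
    set B : ℝ → ℝ := fun t => ∫ s in (0:ℝ)..t, f2 s with hBdef
    have hwx : w = fun t => (1/φ) * (u t * A t - v t * B t) := by
      rw [hw]; funext t
      have key : ∀ s : ℝ, Real.exp (-δ*(t-s)) * Real.sin (φ*(t-s)) * g s
          = u t * f1 s - v t * f2 s := by
        intro s
        simp only [hudef, hvdef, hf1def, hf2def]
        rw [show -δ*(t-s) = -δ*t + δ*s by ring, Real.exp_add,
            show φ*(t-s) = φ*t - φ*s by ring, Real.sin_sub]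
        ring
      simp only [key]
      rw [intervalIntegral.integral_sub ((hf1c.intervalIntegrable 0 t).const_mul (u t))
            ((hf2c.intervalIntegrable 0 t).const_mul (v t)),
          intervalIntegral.integral_const_mul, intervalIntegral.integral_const_mul]
    have hA' : ∀ t, HasDerivAt A (f1 t) t := fun t =>
      intervalIntegral.integral_hasDerivAt_right (hf1c.intervalIntegrable 0 t)
        (hf1c.stronglyMeasurableAtFilter _ _) hf1c.continuousAt
    have hB' : ∀ t, HasDerivAt B (f2 t) t := fun t =>
      intervalIntegral.integral_hasDerivAt_right (hf2c.intervalIntegrable 0 t)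
        (hf2c.stronglyMeasurableAtFilter _ _) hf2c.continuousAt
    set W1 : ℝ → ℝ := fun t => (1/φ) * (u1 t * A t - v1 t * B t) with hW1def
    have hw' : ∀ t, HasDerivAt w (W1 t) t := by
      intro t
      rw [hwx]
      have := (((hu' t).mul (hA' t)).sub ((hv' t).mul (hB' t))).const_mul (1/φ)
      refine this.congr_deriv ?_; symm
      rw [hW1def]
      linear_combination (-(1/φ)) * hcross0 t
    have hderivw : deriv w = W1 := funext fun t => (hw' t).deriv
    have hW1' : ∀ t, HasDerivAt W1
        ((1/φ) * ((-2*δ*u1 t - lam*u t) * A t - (-2*δ*v1 t - lam*v t) * B t) + g t) t := by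
      intro t
      have := (((hu1' t).mul (hA' t)).sub ((hv1' t).mul (hB' t))).const_mul (1/φ)
      rw [hW1def]
      refine this.congr_deriv ?_; symm
      linear_combination (-1 : ℝ) * hcross1 t
    constructor
    · intro t _
      rw [hderivw, (hW1' t).deriv, hwx, hW1def]
      simp only []
      ring
    · intro t ht
      set M := K * (Real.exp (c*t) / c) with hMdef
      have hM0 : 0 ≤ M := by positivity
      have hfb : ∀ i : ℝ → ℝ, Continuous i → (∀ s ≥ (0:ℝ), |i s| ≤ K * Real.exp (-(γ₀-δ)*s)) →
          |∫ s in (0:ℝ)..t, i s| ≤ M := by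
        intro i hic hib
        calc |∫ s in (0:ℝ)..t, i s| ≤ ∫ s in (0:ℝ)..t, |i s| :=
              intervalIntegral.abs_integral_le_integral_abs ht
          _ ≤ ∫ s in (0:ℝ)..t, K * Real.exp (c*s) := by
              apply intervalIntegral.integral_mono_on ht (hic.abs.intervalIntegrable 0 t)
                ((continuous_const.mul (Real.continuous_exp.comp
                  (continuous_const.mul continuous_id))).intervalIntegrable 0 t)
              intro s hs
              have := hib s hs.1
              rw [show -(γ₀-δ) = c by rw [hcdef]; ring] at this
              exact this
          _ = K * ((Real.exp (c*t) - 1)/c) := by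
              rw [intervalIntegral.integral_const_mul, expInt c hc.ne' 0 t, mul_zero,
                Real.exp_zero]
          _ ≤ M := by
              rw [hMdef]
              apply mul_le_mul_of_nonneg_left _ hK
              gcongr
              linarith [Real.exp_pos (c*t)]
      have hAb : |A t| ≤ M := hfb f1 hf1c hf1b
      have hBb : |B t| ≤ M := hfb f2 hf2c hf2b
      have p1 : |u t| * |A t| ≤ Real.exp (-δ*t) * M :=
        mul_le_mul (hub t) hAb (abs_nonneg _) (Real.exp_pos _).le
      have p2 : |v t| * |B t| ≤ Real.exp (-δ*t) * M :=
        mul_le_mul (hvb t) hBb (abs_nonneg _) (Real.exp_pos _).le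
      have p3 : |u1 t| * |A t| ≤ (φ+δ) * Real.exp (-δ*t) * M :=
        mul_le_mul (hu1b t) hAb (abs_nonneg _) (by positivity)
      have p4 : |v1 t| * |B t| ≤ (φ+δ) * Real.exp (-δ*t) * M :=
        mul_le_mul (hv1b t) hBb (abs_nonneg _) (by positivity)
      have hwb : |w t| ≤ (1/φ) * (2 * (Real.exp (-δ*t) * M)) := by
        simp only [hwx]
        rw [abs_mul, abs_of_pos (by positivity : (0:ℝ) < 1/φ)]
        apply mul_le_mul_of_nonneg_left _ (by positivity : (0:ℝ) ≤ 1/φ)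
        calc |u t * A t - v t * B t| ≤ |u t * A t| + |v t * B t| := abs_sub _ _
          _ = |u t| * |A t| + |v t| * |B t| := by rw [abs_mul (u t) (A t), abs_mul (v t) (B t)]
          _ ≤ 2 * (Real.exp (-δ*t) * M) := by linarith
      have hW1b : |W1 t| ≤ (1/φ) * (2 * ((φ+δ) * Real.exp (-δ*t) * M)) := by
        rw [hW1def]
        simp only []
        rw [abs_mul, abs_of_pos (by positivity : (0:ℝ) < 1/φ)]
        apply mul_le_mul_of_nonneg_left _ (by positivity : (0:ℝ) ≤ 1/φ)
        calc |u1 t * A t - v1 t * B t| ≤ |u1 t * A t| + |v1 t * B t| := abs_sub _ _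
          _ = |u1 t| * |A t| + |v1 t| * |B t| := by rw [abs_mul (u1 t) (A t), abs_mul (v1 t) (B t)]
          _ ≤ 2 * ((φ+δ) * Real.exp (-δ*t) * M) := by linarith
      have hexp : Real.exp (-δ*t) * Real.exp (c*t) = Real.exp (-γ₀*t) := by
        rw [← Real.exp_add]; congr 1; rw [hcdef]; ring
      have heq : (1/φ) * (2 * (Real.exp (-δ*t) * M)) +
          (1/φ) * (2 * ((φ+δ) * Real.exp (-δ*t) * M)) =
          (2 + 2*(φ+δ))/(φ*c) * K * Real.exp (-γ₀*t) := by
        rw [hMdef, ← hexp]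
        field_simp
      rw [hderivw]
      linarith [hwb, hW1b]
  · -- case δ < γ₀
    have hc : 0 < γ₀ - δ := by linarith
    refine ⟨(2 + 2*(φ+δ))/(φ*(γ₀-δ)), ?_⟩
    intro w hw
    rcases hw with ⟨h2, -⟩ | ⟨-, hw⟩
    · exact absurd h2 (by linarith)
    have hint : ∀ i : ℝ → ℝ, Continuous i → (∀ s ≥ (0:ℝ), |i s| ≤ K * Real.exp (-(γ₀-δ)*s)) →
        ∀ t : ℝ, IntegrableOn i (Set.Ioi t) := by
      intro i hic hib t
      have h1 : IntegrableOn i (Set.Ioi (max t 0)) := by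
        apply Integrable.mono' (((exp_neg_integrableOn_Ioi (max t 0) hc)).const_mul K)
          hic.aestronglyMeasurable.restrict
        filter_upwards [MeasureTheory.self_mem_ae_restrict measurableSet_Ioi] with s hs
        have hs0 : (0:ℝ) ≤ s := le_of_lt (lt_of_le_of_lt (le_max_right t 0) hs)
        simpa using hib s hs0
      have h2' : IntegrableOn i (Set.Ioc t (max t 0)) :=
        (hic.integrableOn_Icc).mono_set Set.Ioc_subset_Icc_self
      have h3 := h2'.union h1
      rwa [Set.Ioc_union_Ioi_eq_Ioi (le_max_left t 0)] at h3
    have hintf1 := hint f1 hf1c hf1b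
    have hintf2 := hint f2 hf2c hf2b
    set CC : ℝ → ℝ := fun t => ∫ s in Set.Ioi t, f1 s with hCdef
    set DD : ℝ → ℝ := fun t => ∫ s in Set.Ioi t, f2 s with hDdef
    have hwx : w = fun t => -(1/φ) * (u t * CC t - v t * DD t) := by
      rw [hw]; funext t
      have key : ∀ s : ℝ, Real.exp (-δ*(t-s)) * Real.sin (φ*(t-s)) * g s
          = u t * f1 s - v t * f2 s := by
        intro s
        simp only [hudef, hvdef, hf1def, hf2def]
        rw [show -δ*(t-s) = -δ*t + δ*s by ring, Real.exp_add,
            show φ*(t-s) = φ*t - φ*s by ring, Real.sin_sub]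
        ring
      simp only [key]
      rw [MeasureTheory.integral_sub ((hintf1 t).const_mul (u t))
            ((hintf2 t).const_mul (v t)),
          MeasureTheory.integral_const_mul, MeasureTheory.integral_const_mul]
    have hC' : ∀ t, HasDerivAt CC (-f1 t) t := by
      intro t
      have hsplit : ∀ x ∈ Set.Ioi (t-1), CC x = CC (t-1) - ∫ s in (t-1)..x, f1 s := by
        intro x hx
        have hx' : t-1 ≤ x := le_of_lt hx
        have hu' : (∫ s in Set.Ioi (t-1), f1 s)
            = (∫ s in Set.Ioc (t-1) x, f1 s) + ∫ s in Set.Ioi x, f1 s := by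
          rw [← MeasureTheory.setIntegral_union (Set.Ioc_disjoint_Ioi le_rfl)
            measurableSet_Ioi ((hintf1 (t-1)).mono_set Set.Ioc_subset_Ioi_self) (hintf1 x),
            Set.Ioc_union_Ioi_eq_Ioi hx']
        rw [hCdef]
        simp only []
        rw [intervalIntegral.integral_of_le hx']
        linarith [hu']
      have hd : HasDerivAt (fun x => CC (t-1) - ∫ s in (t-1)..x, f1 s) (-f1 t) t := by
        have := ((intervalIntegral.integral_hasDerivAt_right (hf1c.intervalIntegrable (t-1) t)
          (hf1c.stronglyMeasurableAtFilter _ _) hf1c.continuousAt).neg).const_add (CC (t-1))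
        simpa [sub_eq_add_neg] using this
      exact hd.congr_of_eventuallyEq
        (Filter.eventuallyEq_of_mem (Ioi_mem_nhds (by linarith)) hsplit)
    have hD' : ∀ t, HasDerivAt DD (-f2 t) t := by
      intro t
      have hsplit : ∀ x ∈ Set.Ioi (t-1), DD x = DD (t-1) - ∫ s in (t-1)..x, f2 s := by
        intro x hx
        have hx' : t-1 ≤ x := le_of_lt hx
        have hu' : (∫ s in Set.Ioi (t-1), f2 s)
            = (∫ s in Set.Ioc (t-1) x, f2 s) + ∫ s in Set.Ioi x, f2 s := by
          rw [← MeasureTheory.setIntegral_union (Set.Ioc_disjoint_Ioi le_rfl)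
            measurableSet_Ioi ((hintf2 (t-1)).mono_set Set.Ioc_subset_Ioi_self) (hintf2 x),
            Set.Ioc_union_Ioi_eq_Ioi hx']
        rw [hDdef]
        simp only []
        rw [intervalIntegral.integral_of_le hx']
        linarith [hu']
      have hd : HasDerivAt (fun x => DD (t-1) - ∫ s in (t-1)..x, f2 s) (-f2 t) t := by
        have := ((intervalIntegral.integral_hasDerivAt_right (hf2c.intervalIntegrable (t-1) t)
          (hf2c.stronglyMeasurableAtFilter _ _) hf2c.continuousAt).neg).const_add (DD (t-1))
        simpa [sub_eq_add_neg] using this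
      exact hd.congr_of_eventuallyEq
        (Filter.eventuallyEq_of_mem (Ioi_mem_nhds (by linarith)) hsplit)
    set W1 : ℝ → ℝ := fun t => -(1/φ) * (u1 t * CC t - v1 t * DD t) with hW1def
    have hw' : ∀ t, HasDerivAt w (W1 t) t := by
      intro t
      rw [hwx]
      have := (((hu' t).mul (hC' t)).sub ((hv' t).mul (hD' t))).const_mul (-(1/φ))
      refine this.congr_deriv ?_; symm
      rw [hW1def]
      linear_combination (-(1/φ)) * hcross0 t
    have hderivw : deriv w = W1 := funext fun t => (hw' t).deriv
    have hW1' : ∀ t, HasDerivAt W1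
        (-(1/φ) * ((-2*δ*u1 t - lam*u t) * CC t - (-2*δ*v1 t - lam*v t) * DD t) + g t) t := by
      intro t
      have := (((hu1' t).mul (hC' t)).sub ((hv1' t).mul (hD' t))).const_mul (-(1/φ))
      rw [hW1def]
      refine this.congr_deriv ?_; symm
      linear_combination (-1 : ℝ) * hcross1 t
    constructor
    · intro t _
      rw [hderivw, (hW1' t).deriv, hwx, hW1def]
      simp only []
      ring
    · intro t ht
      set M := K * (Real.exp (-(γ₀-δ)*t) / (γ₀-δ)) with hMdef
      have hM0 : 0 ≤ M := by positivity
      have hfb : ∀ i : ℝ → ℝ, Continuous i → (∀ s ≥ (0:ℝ), |i s| ≤ K * Real.exp (-(γ₀-δ)*s)) →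
          |∫ s in Set.Ioi t, i s| ≤ M := by
        intro i hic hib
        calc |∫ s in Set.Ioi t, i s| ≤ ∫ s in Set.Ioi t, |i s| := by
              simpa [Real.norm_eq_abs] using
                MeasureTheory.norm_integral_le_integral_norm (μ := volume.restrict (Set.Ioi t)) i
          _ ≤ ∫ s in Set.Ioi t, K * Real.exp (-(γ₀-δ)*s) := by
              apply MeasureTheory.setIntegral_mono_on ((hint i hic hib t).abs)
                ((exp_neg_integrableOn_Ioi t hc).const_mul K) measurableSet_Ioi
              intro s hs
              exact hib s (le_of_lt (lt_of_le_of_lt ht hs))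
          _ = M := by
              rw [MeasureTheory.integral_const_mul, expIoi (γ₀-δ) t hc, hMdef]
      have hAb : |CC t| ≤ M := hfb f1 hf1c hf1b
      have hBb : |DD t| ≤ M := hfb f2 hf2c hf2b
      have p1 : |u t| * |CC t| ≤ Real.exp (-δ*t) * M :=
        mul_le_mul (hub t) hAb (abs_nonneg _) (Real.exp_pos _).le
      have p2 : |v t| * |DD t| ≤ Real.exp (-δ*t) * M :=
        mul_le_mul (hvb t) hBb (abs_nonneg _) (Real.exp_pos _).le
      have p3 : |u1 t| * |CC t| ≤ (φ+δ) * Real.exp (-δ*t) * M :=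
        mul_le_mul (hu1b t) hAb (abs_nonneg _) (by positivity)
      have p4 : |v1 t| * |DD t| ≤ (φ+δ) * Real.exp (-δ*t) * M :=
        mul_le_mul (hv1b t) hBb (abs_nonneg _) (by positivity)
      have hwb : |w t| ≤ (1/φ) * (2 * (Real.exp (-δ*t) * M)) := by
        simp only [hwx]
        rw [abs_mul, abs_neg, abs_of_pos (by positivity : (0:ℝ) < 1/φ)]
        apply mul_le_mul_of_nonneg_left _ (by positivity : (0:ℝ) ≤ 1/φ)
        calc |u t * CC t - v t * DD t| ≤ |u t * CC t| + |v t * DD t| := abs_sub _ _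
          _ = |u t| * |CC t| + |v t| * |DD t| := by
              rw [abs_mul (u t) (CC t), abs_mul (v t) (DD t)]
          _ ≤ 2 * (Real.exp (-δ*t) * M) := by linarith
      have hW1b : |W1 t| ≤ (1/φ) * (2 * ((φ+δ) * Real.exp (-δ*t) * M)) := by
        rw [hW1def]
        simp only []
        rw [abs_mul, abs_neg, abs_of_pos (by positivity : (0:ℝ) < 1/φ)]
        apply mul_le_mul_of_nonneg_left _ (by positivity : (0:ℝ) ≤ 1/φ)
        calc |u1 t * CC t - v1 t * DD t| ≤ |u1 t * CC t| + |v1 t * DD t| := abs_sub _ _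
          _ = |u1 t| * |CC t| + |v1 t| * |DD t| := by
              rw [abs_mul (u1 t) (CC t), abs_mul (v1 t) (DD t)]
          _ ≤ 2 * ((φ+δ) * Real.exp (-δ*t) * M) := by linarith
      have hexp : Real.exp (-δ*t) * Real.exp (-(γ₀-δ)*t) = Real.exp (-γ₀*t) := by
        rw [← Real.exp_add]; congr 1; ring
      have heq : (1/φ) * (2 * (Real.exp (-δ*t) * M)) +
          (1/φ) * (2 * ((φ+δ) * Real.exp (-δ*t) * M)) =
          (2 + 2*(φ+δ))/(φ*(γ₀-δ)) * K * Real.exp (-γ₀*t) := by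
        rw [hMdef, ← hexp]
        field_simp
      rw [hderivw]
      linarith [hwb, hW1b]
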